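/- Let X be an open (complete, noncompact, boundaryless) Alexandrov space of nonnegative curvature, and let f be the Cheeger–Gromoll function f(x) = lim_{t→∞}[t - d(x, ∂B(x₀,t))]. Then every sublevel set Ω_c = f⁻¹((-∞,c]) with c ≥ f(x₀) is compact. -/

import Mathlib

open Set Metric Filter

/-- `γ` restricted to `[a,b]` is a unit-speed minimizing geodesic segment. -/
def IsGeodesicOn {X : Type*} [MetricSpace X] (γ : ℝ → X) (a b : ℝ) : Prop :=
  ∀ s ∈ Set.Icc a b, ∀ t ∈ Set.Icc a b, dist (γ s) (γ t) = |s - t|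

/-- Nonnegative curvature in the comparison sense. -/
def NonnegCurv (X : Type*) [MetricSpace X] : Prop :=
  ∀ (γ : ℝ → X) (a b : ℝ), a < b → IsGeodesicOn γ a b →
    ∀ x : X, ∀ t ∈ Set.Icc a b,
      (1 - (t - a) / (b - a)) * (dist x (γ a)) ^ 2 +
        ((t - a) / (b - a)) * (dist x (γ b)) ^ 2 - (t - a) * (b - t) ≤
      (dist x (γ t)) ^ 2

section CGAux

variable {X : Type*} [MetricSpace X] [ProperSpace X]

lemma cg_exists_far (hnc : ¬ CompactSpace X) (x₀ : X) (R : ℝ) : ∃ y : X, R ≤ dist x₀ y := by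
  by_contra h
  push_neg at h
  refine hnc (isCompact_univ_iff.mp ?_)
  refine (isCompact_closedBall x₀ R).of_isClosed_subset isClosed_univ fun y _ => ?_
  exact mem_closedBall.mpr (le_of_lt (dist_comm x₀ y ▸ h y))

lemma cg_sphere_ne (hnc : ¬ CompactSpace X)
    (hgeo : ∀ x y : X, ∃ γ : ℝ → X,
      IsGeodesicOn γ 0 (dist x y) ∧ γ 0 = x ∧ γ (dist x y) = y)
    (x₀ : X) {t : ℝ} (ht : 0 ≤ t) : (Metric.sphere x₀ t).Nonempty := by
  obtain ⟨y, hy⟩ := cg_exists_far hnc x₀ t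
  obtain ⟨γ, hγ, h0, _⟩ := hgeo x₀ y
  refine ⟨γ t, ?_⟩
  have := hγ t ⟨ht, le_trans hy (by simp)⟩ 0 ⟨le_refl 0, dist_nonneg⟩
  rw [mem_sphere, ← h0, this, abs_of_nonneg (by linarith)]
  ring

lemma cg_le_infDist {s : Set X} {x : X} {b : ℝ} (hs : s.Nonempty)
    (h : ∀ y ∈ s, b ≤ dist x y) : b ≤ infDist x s := by
  by_contra hb
  push_neg at hb
  obtain ⟨y, hy, hlt⟩ := (infDist_lt_iff hs).mp hb
  exact absurd hlt (not_lt.mpr (h y hy))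

lemma cg_f_lipschitz (x₀ : X) (f : X → ℝ)
    (hf : ∀ x : X,
      Tendsto (fun t : ℝ => t - infDist x (sphere x₀ t)) atTop (nhds (f x)))
    (x y : X) : |f x - f y| ≤ dist x y := by
  have h1 : Tendsto (fun t : ℝ =>
      |(t - infDist x (sphere x₀ t)) - (t - infDist y (sphere x₀ t))|) atTop
      (nhds |f x - f y|) := (Tendsto.sub (hf x) (hf y)).abs
  refine le_of_tendsto h1 (Eventually.of_forall fun t => ?_)
  have h2 : infDist x (sphere x₀ t) ≤ infDist y (sphere x₀ t) + dist x y :=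
    infDist_le_infDist_add_dist
  have h3 : infDist y (sphere x₀ t) ≤ infDist x (sphere x₀ t) + dist y x :=
    infDist_le_infDist_add_dist
  rw [abs_le]
  rw [dist_comm y x] at h3
  constructor <;> nlinarith

lemma cg_f_x0 (x₀ : X) (f : X → ℝ)
    (hsp : ∀ t : ℝ, 0 ≤ t → (Metric.sphere x₀ t).Nonempty)
    (hf : ∀ x : X,
      Tendsto (fun t : ℝ => t - infDist x (sphere x₀ t)) atTop (nhds (f x))) :
    f x₀ = 0 := by
  have h1 : (fun t : ℝ => t - infDist x₀ (sphere x₀ t)) =ᶠ[atTop] fun _ => (0:ℝ) := by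
    filter_upwards [eventually_ge_atTop (0:ℝ)] with t ht
    have : infDist x₀ (sphere x₀ t) = t := by
      refine le_antisymm ?_ ?_
      · obtain ⟨z, hz⟩ := hsp t ht
        calc infDist x₀ (sphere x₀ t) ≤ dist x₀ z := infDist_le_dist_of_mem hz
        _ = t := by rw [dist_comm]; exact mem_sphere.mp hz
      · refine cg_le_infDist (hsp t ht) fun z hz => ?_
        rw [dist_comm]; exact le_of_eq (mem_sphere.mp hz).symm
    simp [this]
  have h2 := hf x₀
  rw [tendsto_congr' h1] at h2
  exact tendsto_nhds_unique h2 tendsto_const_nhds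

lemma cg_f_convex (x₀ : X) (f : X → ℝ)
    (hcurv : NonnegCurv X)
    (hsp : ∀ t : ℝ, 0 ≤ t → (Metric.sphere x₀ t).Nonempty)
    (hf : ∀ x : X,
      Tendsto (fun t : ℝ => t - infDist x (sphere x₀ t)) atTop (nhds (f x)))
    (γ : ℝ → X) (L : ℝ) (hL : 0 < L) (hg : IsGeodesicOn γ 0 L)
    {t : ℝ} (ht0 : 0 ≤ t) (htL : t ≤ L) :
    f (γ t) ≤ (1 - t / L) * f (γ 0) + (t / L) * f (γ L) := by
  set lam := t / L with hlamdef
  have hlam0 : 0 ≤ lam := div_nonneg ht0 hL.le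
  have hlam1 : lam ≤ 1 := (div_le_one hL).mpr htL
  set K := t * (L - t) with hKdef
  have hK0 : 0 ≤ K := mul_nonneg ht0 (by linarith)
  have hsqK : Real.sqrt K ^ 2 = K := Real.sq_sqrt hK0
  have hsK : 0 ≤ Real.sqrt K := Real.sqrt_nonneg _
  set C := max (dist x₀ (γ 0)) (dist x₀ (γ L)) with hCdef
  have hC0 : 0 ≤ C := le_trans dist_nonneg (le_max_left _ _)
  clear_value lam K C
  have key : ∀ T : ℝ, C + Real.sqrt K + 1 ≤ T →
      T - infDist (γ t) (sphere x₀ T) ≤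
        (1 - lam) * (T - infDist (γ 0) (sphere x₀ T)) +
          lam * (T - infDist (γ L) (sphere x₀ T)) + K / (T - C) := by
    intro T hT
    have hT0 : 0 ≤ T := by linarith
    have hTC : 0 < T - C := by linarith
    have hne := hsp T hT0
    obtain ⟨z, hz, hdz⟩ := (isClosed_sphere).exists_infDist_eq_dist hne (γ t)
    set Da := infDist (γ 0) (sphere x₀ T) with hDadef
    set Db := infDist (γ L) (sphere x₀ T) with hDbdef
    set Dt := infDist (γ t) (sphere x₀ T) with hDtdef
    have hDa0 : 0 ≤ Da := infDist_nonneg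
    have hDb0 : 0 ≤ Db := infDist_nonneg
    have hDt0 : 0 ≤ Dt := infDist_nonneg
    have hDa : Da ≤ dist z (γ 0) := by
      rw [dist_comm]; exact infDist_le_dist_of_mem hz
    have hDb : Db ≤ dist z (γ L) := by
      rw [dist_comm]; exact infDist_le_dist_of_mem hz
    have sphere_dist : ∀ (w : X), ∀ y ∈ sphere x₀ T, T - dist x₀ w ≤ dist w y := by
      intro w y hy
      have h1 : dist x₀ y = T := by rw [dist_comm]; exact mem_sphere.mp hy
      have h2 := dist_triangle x₀ w y
      linarith
    have hDaT : T - C ≤ Da := by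
      refine le_trans ?_ (cg_le_infDist hne (sphere_dist (γ 0)))
      have := le_max_left (dist x₀ (γ 0)) (dist x₀ (γ L))
      linarith
    have hDbT : T - C ≤ Db := by
      refine le_trans ?_ (cg_le_infDist hne (sphere_dist (γ L)))
      have := le_max_right (dist x₀ (γ 0)) (dist x₀ (γ L))
      linarith
    have hcv := hcurv γ 0 L hL hg z t ⟨ht0, htL⟩
    simp only [sub_zero] at hcv
    have hzt : dist z (γ t) = Dt := by rw [dist_comm, ← hdz]
    rw [hzt, ← hlamdef, ← hKdef] at hcv
    clear_value Da Db Dt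
    set M := (1 - lam) * Da + lam * Db with hMdef
    clear_value M
    have h1 : (1 - lam) * Da ^ 2 + lam * Db ^ 2 - K ≤ Dt ^ 2 := by
      have sa : Da ^ 2 ≤ dist z (γ 0) ^ 2 := pow_le_pow_left₀ hDa0 hDa 2
      have sb : Db ^ 2 ≤ dist z (γ L) ^ 2 := pow_le_pow_left₀ hDb0 hDb 2
      linarith [mul_le_mul_of_nonneg_left sa (by linarith : (0:ℝ) ≤ 1 - lam),
        mul_le_mul_of_nonneg_left sb hlam0]
    have h2 : M ^ 2 - K ≤ Dt ^ 2 := by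
      have h5 : (1 - lam) * Da ^ 2 + lam * Db ^ 2 - M ^ 2
          = lam * (1 - lam) * (Da - Db) ^ 2 := by rw [hMdef]; ring
      linarith [h5, mul_nonneg (mul_nonneg hlam0 (by linarith : (0:ℝ) ≤ 1 - lam))
        (sq_nonneg (Da - Db))]
    have hMTC : T - C ≤ M := by
      linarith [hMdef, mul_nonneg (by linarith : (0:ℝ) ≤ 1 - lam)
          (by linarith : (0:ℝ) ≤ Da - (T - C)),
        mul_nonneg hlam0 (by linarith : (0:ℝ) ≤ Db - (T - C))]
    have hM : Real.sqrt K + 1 ≤ M := by linarith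
    have hMpos : 0 < M := by linarith
    have hKM2 : K ≤ M ^ 2 := by
      linarith [hsqK, mul_nonneg (by linarith : (0:ℝ) ≤ M - Real.sqrt K)
        (by linarith : (0:ℝ) ≤ M + Real.sqrt K)]
    set q := K / M with hqdef
    have hq0 : 0 ≤ q := div_nonneg hK0 hMpos.le
    have hqM : q * M = K := div_mul_cancel₀ K hMpos.ne'
    have hqle : q ≤ M := by
      rw [hqdef, div_le_iff₀ hMpos]; nlinarith [hKM2]
    clear_value q
    have h3 : M - q ≤ Dt := by
      by_contra hcon
      push_neg at hcon
      have h4 : Dt ^ 2 < (M - q) ^ 2 := pow_lt_pow_left₀ hcon hDt0 (by norm_num)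
      linarith [h2, h4, hqM, mul_le_mul_of_nonneg_left hqle hq0]
    have hdivle : K / M ≤ K / (T - C) :=
      div_le_div_of_nonneg_left hK0 hTC hMTC
    have hTM : (1 - lam) * (T - Da) + lam * (T - Db) = T - M := by rw [hMdef]; ring
    rw [hTM]
    have : M - K / (T - C) ≤ Dt := by
      rw [hqdef] at h3 hqle
      linarith
    linarith
  have h0lim : Tendsto (fun T : ℝ => K / (T - C)) atTop (nhds 0) := by
    have h1 : Tendsto (fun T : ℝ => T - C) atTop atTop :=
      tendsto_atTop_add_const_right atTop (-C) tendsto_id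
    have h2 := (tendsto_inv_atTop_zero.comp h1).const_mul K
    simpa [div_eq_mul_inv] using h2
  have hR : Tendsto (fun T : ℝ =>
      (1 - lam) * (T - infDist (γ 0) (sphere x₀ T)) +
        lam * (T - infDist (γ L) (sphere x₀ T)) + K / (T - C)) atTop
      (nhds ((1 - lam) * f (γ 0) + lam * f (γ L) + 0)) :=
    (((hf (γ 0)).const_mul (1 - lam)).add ((hf (γ L)).const_mul lam)).add h0lim
  have hle := le_of_tendsto_of_tendsto (hf (γ t)) hR
    ((eventually_ge_atTop (C + Real.sqrt K + 1)).mono key)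
  linarith

end CGAux

/-- On an open (complete, noncompact, boundaryless) nonnegatively curved space,
every sublevel set `Ω_c = f⁻¹((-∞,c])` with `c ≥ f(x₀)` of the Cheeger–Gromoll
function `f(x) = lim_{t→∞}[t - d(x, ∂B(x₀,t))]` is compact. -/
theorem cheegerGromoll_sublevel_compact
    {X : Type*} [MetricSpace X] [ProperSpace X]
    (hnoncompact : ¬ CompactSpace X)
    (hgeo : ∀ x y : X, ∃ γ : ℝ → X,
      IsGeodesicOn γ 0 (dist x y) ∧ γ 0 = x ∧ γ (dist x y) = y)
    (hcurv : NonnegCurv X)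
    (x₀ : X) (f : X → ℝ)
    (hf : ∀ x : X,
      Tendsto (fun t : ℝ => t - infDist x (sphere x₀ t)) atTop (nhds (f x))) :
    ∀ c : ℝ, f x₀ ≤ c → IsCompact (f ⁻¹' Set.Iic c) := by
  intro c hc
  have hsp : ∀ t : ℝ, 0 ≤ t → (Metric.sphere x₀ t).Nonempty := fun t ht =>
    cg_sphere_ne hnoncompact hgeo x₀ ht
  have hf0 : f x₀ = 0 := cg_f_x0 x₀ f hsp hf
  have hc0 : 0 ≤ c := hf0 ▸ hc
  have hlip : ∀ x y : X, |f x - f y| ≤ dist x y := cg_f_lipschitz x₀ f hf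
  have hcont : Continuous f := by
    refine LipschitzWith.continuous (K := 1) ?_
    refine LipschitzWith.of_dist_le_mul fun x y => ?_
    rw [Real.dist_eq]
    simpa using hlip x y
  refine isCompact_of_isClosed_isBounded (isClosed_Iic.preimage hcont) ?_
  by_contra hB
  -- points of the sublevel set arbitrarily far away
  have hfar : ∀ n : ℕ, ∃ x : X, f x ≤ c ∧ (n : ℝ) ≤ dist x₀ x := by
    intro n
    by_contra h
    push_neg at h
    refine hB ((isBounded_closedBall (x := x₀) (r := n)).subset ?_)
    intro x hx
    exact mem_closedBall.mpr (by rw [dist_comm]; exact (h x hx).le)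
  choose x hxc hxd using hfar
  choose γ hγ hγ0 hγe using fun n => hgeo x₀ (x n)
  set d : ℕ → ℝ := fun n => dist x₀ (x n) with hd
  have hd0 : ∀ n, 0 ≤ d n := fun n => dist_nonneg
  have hdn : ∀ n : ℕ, (n : ℝ) ≤ d n := hxd
  set F : ℕ → ℝ → X := fun n s => γ n (max 0 (min s (d n))) with hF
  have hclamp : ∀ (n : ℕ) (s : ℝ), 0 ≤ s → s ≤ d n → F n s = γ n s := by
    intro n s h0 h1
    rw [hF]
    simp [min_eq_left h1, max_eq_right h0]
  have hFmem : ∀ n, F n ∈ Set.univ.pi (fun s : ℝ => closedBall x₀ (max s 0)) := by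
    intro n s _
    have hmem : max 0 (min s (d n)) ∈ Set.Icc 0 (d n) :=
      ⟨le_max_left _ _, max_le (hd0 n) (min_le_right _ _)⟩
    have h1 := hγ n _ hmem 0 ⟨le_refl 0, hd0 n⟩
    rw [hγ0 n] at h1
    have h2 : dist (F n s) x₀ = max 0 (min s (d n)) := by
      rw [hF]
      simp only
      rw [h1, abs_of_nonneg (by simp [hmem.1] : (0:ℝ) ≤ max 0 (min s (d n)) - 0)]
      ring
    rw [mem_closedBall, h2]
    exact max_le (le_max_right s 0) (le_trans (min_le_left _ _) (le_max_left s 0))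
  have hKc : IsCompact (Set.univ.pi fun s : ℝ => closedBall x₀ (max s 0)) :=
    isCompact_univ_pi fun s => isCompact_closedBall _ _
  have hmap : map F atTop ≤ 𝓟 (Set.univ.pi fun s : ℝ => closedBall x₀ (max s 0)) :=
    le_principal_iff.mpr (mem_map.mpr (Eventually.of_forall hFmem))
  obtain ⟨φ, hφmem, hφ⟩ := hKc.exists_clusterPt hmap
  have key : ∀ (S : Finset ℝ) (ε : ℝ), 0 < ε → ∀ N : ℕ,
      ∃ n, N ≤ n ∧ ∀ r ∈ S, dist (F n r) (φ r) < ε := by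
    intro S ε hε N
    have hU : IsOpen ((S : Set ℝ).pi fun r => ball (φ r) ε) :=
      isOpen_set_pi S.finite_toSet fun r _ => isOpen_ball
    have hφU : φ ∈ (S : Set ℝ).pi fun r => ball (φ r) ε := fun r _ => mem_ball_self hε
    have hfreq : ∃ᶠ n in atTop, F n ∈ (S : Set ℝ).pi fun r => ball (φ r) ε :=
      mapClusterPt_iff_frequently.mp hφ _ (hU.mem_nhds hφU)
    obtain ⟨n, hn, hFU⟩ := (frequently_atTop.mp hfreq) N
    exact ⟨n, hn, fun r hr => by simpa [mem_ball] using hFU r hr⟩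
  have hdist0 : ∀ (n : ℕ) (u v : ℝ), 0 ≤ u → u ≤ d n → 0 ≤ v → v ≤ d n →
      dist (γ n u) (γ n v) = |u - v| := fun n u v h1 h2 h3 h4 => hγ n u ⟨h1, h2⟩ v ⟨h3, h4⟩
  have hb : ∀ s : ℝ, 0 ≤ s → dist x₀ (φ s) = s := by
    intro s hs
    have hall : ∀ ε : ℝ, 0 < ε → |dist x₀ (φ s) - s| < ε := by
      intro ε hε
      obtain ⟨n, hn, hF'⟩ := key {s} ε hε ⌈s⌉₊
      have hsn : s ≤ d n :=
        le_trans (le_trans (Nat.le_ceil s) (Nat.cast_le.mpr hn)) (hdn n)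
      have h1 := hF' s (Finset.mem_singleton_self s)
      rw [hclamp n s hs hsn] at h1
      have h2 : dist x₀ (γ n s) = s := by
        have h3 := hdist0 n s 0 hs hsn le_rfl (hd0 n)
        rw [hγ0 n] at h3
        rw [dist_comm, h3, abs_of_nonneg (by linarith)]
        ring
      have h4 : |dist (φ s) x₀ - dist (γ n s) x₀| ≤ dist (φ s) (γ n s) :=
        abs_dist_sub_le _ _ _
      rw [dist_comm (φ s) x₀, dist_comm (γ n s) x₀, h2] at h4
      calc |dist x₀ (φ s) - s| ≤ dist (φ s) (γ n s) := h4
        _ = dist (γ n s) (φ s) := dist_comm _ _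
        _ < ε := h1
    by_contra hne2
    have habs : 0 < |dist x₀ (φ s) - s| := abs_pos.mpr (sub_ne_zero.mpr hne2)
    exact lt_irrefl _ (hall _ habs)
  have hcc : ∀ s T : ℝ, 0 ≤ s → s ≤ T → dist (φ s) (φ T) ≤ T - s := by
    intro s T hs hsT
    refine le_of_forall_pos_le_add fun ε hε => ?_
    obtain ⟨n, hn, hF'⟩ := key {s, T} (ε / 2) (half_pos hε) ⌈T⌉₊
    have hTn : T ≤ d n :=
      le_trans (le_trans (Nat.le_ceil T) (Nat.cast_le.mpr hn)) (hdn n)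
    have hsn : s ≤ d n := le_trans hsT hTn
    have h1 := hF' s (by simp)
    have h2 := hF' T (by simp)
    rw [hclamp n s hs hsn] at h1
    rw [hclamp n T (le_trans hs hsT) hTn] at h2
    have h3 : dist (γ n s) (γ n T) = T - s := by
      rw [hdist0 n s T hs hsn (le_trans hs hsT) hTn, abs_sub_comm,
        abs_of_nonneg (by linarith)]
    have h4 := dist_triangle4 (φ s) (γ n s) (γ n T) (φ T)
    rw [dist_comm (φ s) (γ n s)] at h4
    linarith
  have hdd : ∀ s : ℝ, 0 ≤ s → f (φ s) ≤ c := by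
    intro s hs
    refine le_of_forall_pos_le_add fun ε hε => ?_
    obtain ⟨n, hn, hF'⟩ := key {s} ε hε (max ⌈s⌉₊ 1)
    have hsn : s ≤ d n := le_trans (le_trans (Nat.le_ceil s)
      (Nat.cast_le.mpr (le_trans (le_max_left _ _) hn))) (hdn n)
    have hn1 : (1 : ℕ) ≤ n := le_trans (le_max_right _ _) hn
    have hdpos : 0 < d n :=
      lt_of_lt_of_le one_pos (le_trans (by exact_mod_cast hn1) (hdn n))
    have hconv := cg_f_convex x₀ f hcurv hsp hf (γ n) (d n) hdpos (hγ n) hs hsn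
    rw [hγ0 n, hγe n, hf0] at hconv
    have hl0 : 0 ≤ s / d n := div_nonneg hs hdpos.le
    have hl1 : s / d n ≤ 1 := (div_le_one hdpos).mpr hsn
    have h5 : f (γ n s) ≤ c := by
      have h6 := mul_le_mul_of_nonneg_left (hxc n) hl0
      nlinarith [hconv, h6, mul_le_mul_of_nonneg_right hl1 hc0]
    have h1 := hF' s (Finset.mem_singleton_self s)
    rw [hclamp n s hs hsn] at h1
    have h7 := hlip (φ s) (γ n s)
    have h8 : f (φ s) - f (γ n s) ≤ dist (φ s) (γ n s) := le_trans (le_abs_self _) h7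
    rw [dist_comm] at h8
    linarith
  have hee : ∀ s : ℝ, 0 ≤ s → s ≤ f (φ s) := by
    intro s hs
    refine ge_of_tendsto (hf (φ s)) ?_
    filter_upwards [eventually_ge_atTop s] with T hT
    have hTmem : φ T ∈ sphere x₀ T := by
      rw [mem_sphere, dist_comm]; exact hb T (le_trans hs hT)
    have h1 : infDist (φ s) (sphere x₀ T) ≤ dist (φ s) (φ T) :=
      infDist_le_dist_of_mem hTmem
    have h2 := hcc s T hs hT
    linarith
  have h1 := hee (c + 1) (by linarith)
  have h2 := hdd (c + 1) (by linarith)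
  linarith
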